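/- arXiv:1404.7734 — 2 statements merged into one kernel-verified Lean document; each statement's English description precedes it below -/
import Mathlib

section
/- For every n ∈ ℕ and every k with 1 ≤ k ≤ stb_max(n), there exists an AF F such that |Arg_{stb(F)}| = n and |stb(F)| = k, where Arg_{stb(F)} is the union of all stable extensions of F. -/
structure AF where
  A : Finset ℕ
  R : Set (ℕ × ℕ)
  R_sub : ∀ p ∈ R, p.1 ∈ A ∧ p.2 ∈ A

namespace AF

def cf (F : AF) : Set (Set ℕ) :=
  {S | S ⊆ ↑F.A ∧ ∀ a ∈ S, ∀ b ∈ S, (a, b) ∉ F.R}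

def defends (F : AF) (S : Set ℕ) (a : ℕ) : Prop :=
  ∀ b, (b, a) ∈ F.R → ∃ s ∈ S, (s, b) ∈ F.R

def adm (F : AF) : Set (Set ℕ) :=
  {S | S ∈ F.cf ∧ ∀ a ∈ S, F.defends S a}

def rng (F : AF) (S : Set ℕ) : Set ℕ :=
  S ∪ {b | ∃ s ∈ S, (s, b) ∈ F.R}

def naive (F : AF) : Set (Set ℕ) :=
  {S | S ∈ F.cf ∧ ∀ T ∈ F.cf, S ⊆ T → S = T}

def stb (F : AF) : Set (Set ℕ) :=
  {S | S ∈ F.cf ∧ ∀ a ∈ F.A, a ∉ S → ∃ s ∈ S, (s, a) ∈ F.R}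

def pref (F : AF) : Set (Set ℕ) :=
  {S | S ∈ F.adm ∧ ∀ T ∈ F.adm, S ⊆ T → S = T}

def stage (F : AF) : Set (Set ℕ) :=
  {S | S ∈ F.cf ∧ ¬ ∃ T ∈ F.cf, F.rng S ⊂ F.rng T}

def sem (F : AF) : Set (Set ℕ) :=
  {S | S ∈ F.adm ∧ ¬ ∃ T ∈ F.adm, F.rng S ⊂ F.rng T}

end AF

abbrev Semantics := AF → Set (Set ℕ)

def StandardSemantics : Set Semantics :=
  {AF.naive, AF.stb, AF.stage, AF.pref, AF.sem}

def AFCompact (σ : Semantics) (F : AF) : Prop :=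
  ∀ a ∈ F.A, ∃ S ∈ σ F, a ∈ S

def CAF (σ : Semantics) : Set AF := {F | AFCompact σ F}

def ArgS (𝕊 : Set (Set ℕ)) : Set ℕ := ⋃₀ 𝕊

def PairsS (𝕊 : Set (Set ℕ)) : Set (ℕ × ℕ) :=
  {p | ∃ S ∈ 𝕊, p.1 ∈ S ∧ p.2 ∈ S}

def IsExtensionSet (𝕊 : Set (Set ℕ)) : Prop := (ArgS 𝕊).Finite

def AFStep (F : AF) (a b : ℕ) : Prop := (a, b) ∈ F.R ∨ (b, a) ∈ F.R

def AFConnected (F : AF) : Prop :=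
  ∀ a ∈ F.A, ∀ b ∈ F.A, Relation.ReflTransGen (AFStep F) a b

def sameComp (F : AF) (a b : ℕ) : Prop := Relation.ReflTransGen (AFStep F) a b

def comps (F : AF) : Set (Set ℕ) :=
  {K | ∃ a ∈ F.A, K = {b ∈ (↑F.A : Set ℕ) | sameComp F a b}}

def nopairs (𝕊 : Set (Set ℕ)) (a b : ℕ) : Prop :=
  a ∈ ArgS 𝕊 ∧ b ∈ ArgS 𝕊 ∧ (a, b) ∉ PairsS 𝕊

def compsS (𝕊 : Set (Set ℕ)) : Set (Set ℕ) :=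
  {K | ∃ a ∈ ArgS 𝕊, K = {b ∈ ArgS 𝕊 | Relation.ReflTransGen (nopairs 𝕊) a b}}

noncomputable def sigmaMax (σ : Semantics) (n : ℕ) : ℕ :=
  sSup {k | ∃ F : AF, F.A.card = n ∧ (σ F).ncard = k}

noncomputable def sigmaMaxCon (σ : Semantics) (n : ℕ) : ℕ :=
  sSup {k | ∃ F : AF, F.A.card = n ∧ AFConnected F ∧ (σ F).ncard = k}

noncomputable def sigmaMax2 (σ : Semantics) (n : ℕ) : ℕ :=
  sSup ({k | ∃ F : AF, F.A.card = n ∧ (σ F).ncard = k} \ {sigmaMax σ n})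

def cfSet (𝕊 : Set (Set ℕ)) : Set (Set ℕ) :=
  {S | S ⊆ ArgS 𝕊 ∧ ∀ a ∈ S, ∀ b ∈ S, (a, b) ∈ PairsS 𝕊}

def plusSet (𝕊 : Set (Set ℕ)) : Set (Set ℕ) :=
  {S | S ∈ cfSet 𝕊 ∧ ∀ T ∈ cfSet 𝕊, S ⊆ T → S = T}

def minusSet (𝕊 : Set (Set ℕ)) : Set (Set ℕ) := plusSet 𝕊 \ 𝕊

def Sig (σ : Semantics) : Set (Set (Set ℕ)) := {𝕊 | ∃ F : AF, σ F = 𝕊}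

def cSig (σ : Semantics) : Set (Set (Set ℕ)) :=
  {𝕊 | ∃ F : AF, AFCompact σ F ∧ σ F = 𝕊}

def Pcon (σ : Semantics) (n : ℕ) : Set ℕ :=
  {k | ∃ F : AF, AFCompact σ F ∧ AFConnected F ∧ F.A.card = n ∧ (σ F).ncard = k}

open Classical in
noncomputable def restrictAF (F : AF) (K : Set ℕ) : AF where
  A := F.A.filter (fun a => a ∈ K)
  R := {p | p ∈ F.R ∧ p.1 ∈ K ∧ p.2 ∈ K}
  R_sub := fun p hp => by
    have h := F.R_sub p hp.1
    simp only [Finset.mem_filter]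
    exact ⟨⟨h.1, hp.2.1⟩, ⟨h.2, hp.2.2⟩⟩

def IsExclusionMapping (𝕊 : Set (Set ℕ)) (Rm : Set (ℕ × ℕ)) : Prop :=
  ∃ f : Set ℕ → ℕ,
    (∀ S ∈ minusSet 𝕊, f S ∈ ArgS 𝕊 ∧ f S ∉ S) ∧
    Rm = {p | ∃ S ∈ minusSet 𝕊, p.1 ∈ S ∧ p.2 = f S ∧ p ∉ PairsS 𝕊}

def Independent (𝕊 : Set (Set ℕ)) : Prop :=
  ∃ Rm : Set (ℕ × ℕ), IsExclusionMapping 𝕊 Rm ∧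
    (∀ a b, (a, b) ∈ Rm → (b, a) ∈ Rm → a = b) ∧
    ∀ S ∈ 𝕊, ∀ a ∈ ArgS 𝕊 \ S, ∃ s ∈ S, (s, a) ∉ Rm ∪ PairsS 𝕊

def ConflictExplicit (σ : Semantics) (F : AF) : Prop :=
  ∀ a ∈ F.A, ∀ b ∈ F.A, (a, b) ∉ PairsS (σ F) → (a, b) ∈ F.R ∨ (b, a) ∈ F.R

noncomputable def canonicalCF (𝕊 : Set (Set ℕ)) (h : IsExtensionSet 𝕊) : AF where
  A := h.toFinset
  R := {p | p.1 ∈ ArgS 𝕊 ∧ p.2 ∈ ArgS 𝕊 ∧ p ∉ PairsS 𝕊}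
  R_sub := fun p hp => by
    exact ⟨(Set.Finite.mem_toFinset (s := ArgS 𝕊) (hs := h)).2 hp.1,
      (Set.Finite.mem_toFinset (s := ArgS 𝕊) (hs := h)).2 hp.2.1⟩
section NoncompactStableAux

open Set

lemma AF.mem_stb_subset {F : AF} {S : Set ℕ} (hS : S ∈ F.stb) : S ⊆ ↑F.A := hS.1.1

lemma AF.stb_finite (F : AF) : (F.stb).Finite :=
  (Set.Finite.finite_subsets (F.A.finite_toSet)).subset (fun _ hS => hS.1.1)

lemma AF.stb_incomp {F : AF} {S T : Set ℕ} (hS : S ∈ F.stb) (hT : T ∈ F.stb)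
    (hsub : S ⊆ T) : S = T := by
  by_contra hne
  obtain ⟨a, haT, haS⟩ := Set.exists_of_ssubset (ssubset_of_subset_of_ne hsub hne)
  obtain ⟨s, hsS, hatt⟩ := hS.2 a (hT.1.1 haT) haS
  exact hT.1.2 s (hsub hsS) a haT hatt

lemma AF.stb_ncard_le (F : AF) : (F.stb).ncard ≤ 2 ^ F.A.card := by
  have himg : {t : Set ℕ | t ⊆ (↑F.A : Set ℕ)} =
      (fun s : Finset ℕ => (↑s : Set ℕ)) '' ↑F.A.powerset := by
    ext t
    constructor
    · intro ht
      have hfin : t.Finite := F.A.finite_toSet.subset ht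
      refine ⟨hfin.toFinset, ?_, by simp⟩
      simp only [Finset.coe_powerset, Set.mem_preimage, Set.mem_powerset_iff]
      simpa using ht
    · rintro ⟨s, hs, rfl⟩
      simp only [Finset.coe_powerset, Set.mem_preimage, Set.mem_powerset_iff] at hs
      exact hs
  have h1 : (F.stb).ncard ≤ {t : Set ℕ | t ⊆ (↑F.A : Set ℕ)}.ncard :=
    Set.ncard_le_ncard (fun S hS => hS.1.1)
      (by rw [himg]; exact ((F.A.powerset).finite_toSet).image _)
  rw [himg, Set.ncard_image_of_injective _ Finset.coe_injective,
    Set.ncard_coe_finset, Finset.card_powerset] at h1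
  exact h1

end NoncompactStableAux
noncomputable def killPad (F0 : AF) (D : Set (Set ℕ)) (z : Set ℕ → ℕ) (Zfin B : Finset ℕ)
    (hzZ : ∀ T ∈ D, z T ∈ Zfin) : AF where
  A := (F0.A ∪ Zfin) ∪ B
  R := F0.R ∪ {p : ℕ × ℕ | ∃ T ∈ D, p = (z T, z T)}
        ∪ {p : ℕ × ℕ | ∃ T ∈ D, p.1 ∈ (↑F0.A : Set ℕ) \ T ∧ p.2 = z T}
  R_sub := by
    rintro p hp
    rcases hp with (hp | hp) | hp
    · have h := F0.R_sub p hp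
      constructor <;> simp [h.1, h.2]
    · obtain ⟨T, hT, rfl⟩ := hp
      have := hzZ T hT
      constructor <;> simp [this]
    · obtain ⟨T, hT, h1, h2⟩ := hp
      have hz := hzZ T hT
      have hA : p.1 ∈ F0.A := h1.1
      constructor <;> simp [hA, h2, hz]

theorem stb_killPad (F0 : AF) (D : Set (Set ℕ)) (z : Set ℕ → ℕ) (Zfin B : Finset ℕ)
    (hzZ : ∀ T ∈ D, z T ∈ Zfin)
    (hZz : ∀ w ∈ Zfin, ∃ T ∈ D, z T = w)
    (hzinj : ∀ T1 ∈ D, ∀ T2 ∈ D, z T1 = z T2 → T1 = T2)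
    (hD : D ⊆ AF.stb F0)
    (hZA : Disjoint (↑Zfin : Set ℕ) (↑F0.A : Set ℕ))
    (hBA : Disjoint (↑B : Set ℕ) (↑F0.A : Set ℕ))
    (hBZ : Disjoint (↑B : Set ℕ) (↑Zfin : Set ℕ)) :
    AF.stb (killPad F0 D z Zfin B hzZ) = (fun S => S ∪ ↑B) '' (AF.stb F0 \ D) := by
  set F := killPad F0 D z Zfin B hzZ with hF
  have hRmem : ∀ p : ℕ × ℕ, p ∈ F.R ↔
      p ∈ F0.R ∨ (∃ T ∈ D, p = (z T, z T)) ∨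
        ∃ T ∈ D, p.1 ∈ (↑F0.A : Set ℕ) \ T ∧ p.2 = z T := by
    intro p
    show p ∈ (F0.R ∪ _ ∪ _) ↔ _
    simp only [Set.mem_union, Set.mem_setOf_eq, or_assoc]
  have hAmem : ∀ a : ℕ, a ∈ F.A ↔ a ∈ F0.A ∨ a ∈ Zfin ∨ a ∈ B := by
    intro a
    show a ∈ ((F0.A ∪ Zfin) ∪ B) ↔ _
    simp only [Finset.mem_union, or_assoc]
  ext S
  constructor
  · intro hS
    obtain ⟨⟨hSA, hScf⟩, hSatt⟩ := hS
    have hSZ : ∀ w ∈ Zfin, w ∉ S := by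
      intro w hw hwS
      obtain ⟨T, hT, rfl⟩ := hZz w hw
      exact hScf _ hwS _ hwS ((hRmem _).mpr (Or.inr (Or.inl ⟨T, hT, rfl⟩)))
    have hBS : (↑B : Set ℕ) ⊆ S := by
      intro b hb
      by_contra hbS
      have hbA : b ∈ F.A := (hAmem b).mpr (Or.inr (Or.inr (by exact_mod_cast hb)))
      obtain ⟨s, hsS, hatt⟩ := hSatt b hbA hbS
      rcases (hRmem _).mp hatt with hatt | hatt | hatt
      · exact absurd (F0.R_sub _ hatt).2 (fun h => hBA.ne_of_mem hb h rfl)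
      · obtain ⟨T, hT, heq⟩ := hatt
        have hbz : b = z T := congrArg Prod.snd heq
        exact hBZ.ne_of_mem hb (by exact_mod_cast hbz ▸ hzZ T hT) rfl
      · obtain ⟨T, hT, _, h2⟩ := hatt
        have hbz : b = z T := h2
        exact hBZ.ne_of_mem hb (by exact_mod_cast hbz ▸ hzZ T hT) rfl
    set S' := S ∩ (↑F0.A : Set ℕ) with hS'
    have hSsplit : S = S' ∪ ↑B := by
      apply Set.Subset.antisymm
      · intro a haS
        rcases (hAmem a).mp (hSA haS) with h | h | h
        · exact Or.inl ⟨haS, h⟩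
        · exact absurd haS (hSZ a h)
        · exact Or.inr h
      · exact Set.union_subset (Set.inter_subset_left) hBS
    have hS'stb : S' ∈ AF.stb F0 := by
      refine ⟨⟨Set.inter_subset_right, ?_⟩, ?_⟩
      · intro a ha b hb hab
        exact hScf a ha.1 b hb.1 ((hRmem _).mpr (Or.inl hab))
      · intro a haA haS'
        have haS : a ∉ S := fun h => haS' ⟨h, haA⟩
        obtain ⟨s, hsS, hatt⟩ := hSatt a ((hAmem a).mpr (Or.inl haA)) haS
        rcases (hRmem _).mp hatt with hatt | hatt | hatt
        · have hs := F0.R_sub _ hatt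
          exact ⟨s, ⟨hsS, hs.1⟩, hatt⟩
        · obtain ⟨T, hT, heq⟩ := hatt
          have hsz : s = z T := congrArg Prod.fst heq
          exact absurd hsS (hSZ s (hsz ▸ hzZ T hT))
        · obtain ⟨T, hT, _, h2⟩ := hatt
          have haz : a = z T := h2
          exact absurd haA (fun h => hZA.ne_of_mem (haz ▸ hzZ T hT) h haz.symm)
    have hS'D : S' ∉ D := by
      intro hS'D
      have hzA : z S' ∈ F.A := (hAmem _).mpr (Or.inr (Or.inl (hzZ S' hS'D)))
      have hzS : z S' ∉ S := hSZ _ (hzZ S' hS'D)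
      obtain ⟨s, hsS, hatt⟩ := hSatt (z S') hzA hzS
      rcases (hRmem _).mp hatt with hatt | hatt | hatt
      · exact absurd (F0.R_sub _ hatt).2
          (fun h => hZA.ne_of_mem (hzZ S' hS'D) h rfl)
      · obtain ⟨T, hT, heq⟩ := hatt
        have hsz : s = z T := congrArg Prod.fst heq
        exact absurd hsS (hSZ s (hsz ▸ hzZ T hT))
      · obtain ⟨T, hT, h1, h2⟩ := hatt
        have hTeq : T = S' := hzinj T hT S' hS'D h2.symm
        rw [hTeq] at h1
        exact h1.2 ⟨hsS, h1.1⟩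
    exact ⟨S', ⟨hS'stb, hS'D⟩, hSsplit.symm⟩
  · rintro ⟨S', ⟨hS'stb, hS'D⟩, rfl⟩
    obtain ⟨⟨hS'A, hS'cf⟩, hS'att⟩ := hS'stb
    have hSZdisj : ∀ w ∈ Zfin, w ∉ S' ∪ ↑B := by
      intro w hw hmem
      rcases hmem with h | h
      · exact hZA.ne_of_mem hw (hS'A h) rfl
      · exact hBZ.ne_of_mem h hw rfl
    refine ⟨⟨?_, ?_⟩, ?_⟩
    · intro a ha
      rcases ha with h | h
      · exact Finset.mem_coe.mpr ((hAmem a).mpr (Or.inl (hS'A h)))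
      · exact Finset.mem_coe.mpr ((hAmem a).mpr (Or.inr (Or.inr (by exact_mod_cast h))))
    · intro a ha b hb hab
      rcases (hRmem _).mp hab with hab | hab | hab
      · have hsub := F0.R_sub _ hab
        have ha' : a ∈ S' := by
          rcases ha with h | h
          · exact h
          · exact absurd hsub.1 (fun hh => hBA.ne_of_mem h hh rfl)
        have hb' : b ∈ S' := by
          rcases hb with h | h
          · exact h
          · exact absurd hsub.2 (fun hh => hBA.ne_of_mem h hh rfl)
        exact hS'cf a ha' b hb' hab
      · obtain ⟨T, hT, heq⟩ := hab
        have haz : a = z T := congrArg Prod.fst heq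
        exact hSZdisj a (haz ▸ hzZ T hT) ha
      · obtain ⟨T, hT, _, h2⟩ := hab
        have hbz : b = z T := h2
        exact hSZdisj b (hbz ▸ hzZ T hT) hb
    · intro a haA haS
      rcases (hAmem a).mp haA with h | h | h
      · have haS' : a ∉ S' := fun hh => haS (Or.inl hh)
        obtain ⟨s, hsS, hatt⟩ := hS'att a h haS'
        exact ⟨s, Or.inl hsS, (hRmem _).mpr (Or.inl hatt)⟩
      · obtain ⟨T, hT, rfl⟩ := hZz a h
        have hTstb := hD hT
        have hne : S' ≠ T := fun hh => hS'D (hh ▸ hT)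
        have hnsub : ¬ S' ⊆ T := fun hh =>
          hne (AF.stb_incomp ⟨⟨hS'A, hS'cf⟩, hS'att⟩ hTstb hh)
        obtain ⟨s, hsS', hsT⟩ := Set.not_subset.mp hnsub
        exact ⟨s, Or.inl hsS',
          (hRmem _).mpr (Or.inr (Or.inr ⟨T, hT, ⟨hS'A hsS', hsT⟩, rfl⟩))⟩
      · exact absurd (Or.inr (Finset.mem_coe.mpr h)) haS
theorem noncompact_stable_realizable (n k : ℕ) (h1 : 1 ≤ k)
    (h2 : k ≤ sigmaMax AF.stb n) :
    ∃ F : AF, (ArgS (AF.stb F)).ncard = n ∧ (AF.stb F).ncard = k := by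
  classical
  set SS := {j | ∃ F : AF, F.A.card = n ∧ (AF.stb F).ncard = j} with hSSdef
  have hne : SS.Nonempty :=
    ⟨(AF.stb ⟨Finset.range n, ∅, by simp⟩).ncard, ⟨Finset.range n, ∅, by simp⟩, by simp, rfl⟩
  have hbdd : BddAbove SS := by
    refine ⟨2 ^ n, ?_⟩
    rintro j ⟨F, hFn, rfl⟩
    simpa [hFn] using AF.stb_ncard_le F
  obtain ⟨F0, hF0n, hF0m⟩ : sSup SS ∈ SS := Nat.sSup_mem hne hbdd
  have hkm : k ≤ (AF.stb F0).ncard := by rw [hF0m]; exact h2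
  obtain ⟨𝕋, h𝕋sub, h𝕋k⟩ := Set.exists_subset_card_eq hkm
  set D := AF.stb F0 \ 𝕋 with hDdef
  have hDfin : D.Finite := (AF.stb_finite F0).diff
  set DF := hDfin.toFinset with hDFdef
  set N := F0.A.sup id + 1 with hNdef
  have hltN : ∀ a ∈ F0.A, a < N := fun a ha => Nat.lt_succ_of_le (Finset.le_sup (f := id) ha)
  set d := DF.card with hddef
  set z : Set ℕ → ℕ :=
    fun T => if h : T ∈ DF then N + (DF.equivFin ⟨T, h⟩ : ℕ) else 0 with hzdef
  set Zfin := (Finset.range d).image (fun i => N + i) with hZdef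
  set U := ⋃₀ 𝕋 with hUdef
  have hUsub : U ⊆ ↑F0.A := by
    rintro a ⟨S, hS𝕋, haS⟩
    exact (h𝕋sub hS𝕋).1.1 haS
  have hUfin : U.Finite := F0.A.finite_toSet.subset hUsub
  have hUn : U.ncard ≤ n := by
    have := Set.ncard_le_ncard hUsub F0.A.finite_toSet
    rwa [Set.ncard_coe_finset, hF0n] at this
  set B := (Finset.range (n - U.ncard)).image (fun i => N + d + i) with hBdef
  -- membership shape lemmas
  have hZmem : ∀ w, w ∈ Zfin ↔ ∃ i < d, w = N + i := by
    intro w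
    simp [hZdef, eq_comm]
  have hBmem : ∀ w, w ∈ B ↔ ∃ i < n - U.ncard, w = N + d + i := by
    intro w
    simp [hBdef, eq_comm]
  have hzval : ∀ T (h : T ∈ DF), z T = N + (DF.equivFin ⟨T, h⟩ : ℕ) := by
    intro T h
    simp [hzdef, dif_pos h]
  have hzZ : ∀ T ∈ D, z T ∈ Zfin := by
    intro T hT
    have hTDF : T ∈ DF := hDfin.mem_toFinset.mpr hT
    rw [hzval T hTDF, hZmem]
    exact ⟨_, (DF.equivFin ⟨T, hTDF⟩).isLt, rfl⟩
  have hZz : ∀ w ∈ Zfin, ∃ T ∈ D, z T = w := by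
    intro w hw
    obtain ⟨i, hi, rfl⟩ := (hZmem w).mp hw
    refine ⟨(DF.equivFin.symm ⟨i, hi⟩ : {x // x ∈ DF}).1,
      hDfin.mem_toFinset.mp (DF.equivFin.symm ⟨i, hi⟩).2, ?_⟩
    rw [hzval _ (DF.equivFin.symm ⟨i, hi⟩).2]
    congr 1
    have heta : (⟨(DF.equivFin.symm ⟨i, hi⟩).1, (DF.equivFin.symm ⟨i, hi⟩).2⟩ :
        {x // x ∈ DF}) = DF.equivFin.symm ⟨i, hi⟩ := rfl
    rw [heta, Equiv.apply_symm_apply]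
  have hzinj : ∀ T1 ∈ D, ∀ T2 ∈ D, z T1 = z T2 → T1 = T2 := by
    intro T1 hT1 T2 hT2 heq
    have h1 : T1 ∈ DF := hDfin.mem_toFinset.mpr hT1
    have h2' : T2 ∈ DF := hDfin.mem_toFinset.mpr hT2
    rw [hzval T1 h1, hzval T2 h2'] at heq
    have hh := Nat.add_left_cancel heq
    have hfe : DF.equivFin ⟨T1, h1⟩ = DF.equivFin ⟨T2, h2'⟩ := Fin.ext hh
    exact congrArg Subtype.val (DF.equivFin.injective hfe)
  have hDsub : D ⊆ AF.stb F0 := Set.diff_subset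
  have hZA : Disjoint (↑Zfin : Set ℕ) (↑F0.A : Set ℕ) := by
    rw [Set.disjoint_left]
    intro w hw hwA
    obtain ⟨i, hi, rfl⟩ := (hZmem w).mp (by exact_mod_cast hw)
    have := hltN _ (by exact_mod_cast hwA)
    omega
  have hBA : Disjoint (↑B : Set ℕ) (↑F0.A : Set ℕ) := by
    rw [Set.disjoint_left]
    intro w hw hwA
    obtain ⟨i, hi, rfl⟩ := (hBmem w).mp (by exact_mod_cast hw)
    have := hltN _ (by exact_mod_cast hwA)
    omega
  have hBZ : Disjoint (↑B : Set ℕ) (↑Zfin : Set ℕ) := by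
    rw [Set.disjoint_left]
    intro w hw hwZ
    obtain ⟨i, hi, rfl⟩ := (hBmem w).mp (by exact_mod_cast hw)
    obtain ⟨j, hj, hEq⟩ := (hZmem _).mp (by exact_mod_cast hwZ)
    omega
  refine ⟨killPad F0 D z Zfin B hzZ, ?_, ?_⟩
  · -- cardinality of the union of stable extensions
    rw [stb_killPad F0 D z Zfin B hzZ hZz hzinj hDsub hZA hBA hBZ]
    have hdiff : AF.stb F0 \ D = 𝕋 := by
      rw [hDdef]
      exact Set.diff_diff_cancel_left h𝕋sub
    rw [hdiff]
    have h𝕋ne : 𝕋.Nonempty := by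
      apply Set.nonempty_of_ncard_ne_zero
      omega
    have hArg : ArgS ((fun S => S ∪ (↑B : Set ℕ)) '' 𝕋) = U ∪ ↑B := by
      ext a
      constructor
      · rintro ⟨W, ⟨S, hS, rfl⟩, haW⟩
        rcases haW with h | h
        · exact Or.inl ⟨S, hS, h⟩
        · exact Or.inr h
      · rintro (⟨S, hS, haS⟩ | h)
        · exact ⟨S ∪ ↑B, ⟨S, hS, rfl⟩, Or.inl haS⟩
        · obtain ⟨S, hS⟩ := h𝕋ne
          exact ⟨S ∪ ↑B, ⟨S, hS, rfl⟩, Or.inr h⟩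
    rw [hArg]
    have hdisj : Disjoint U (↑B : Set ℕ) := (hBA.mono_right hUsub).symm
    rw [Set.ncard_union_eq hdisj hUfin B.finite_toSet, Set.ncard_coe_finset]
    have hBcard : B.card = n - U.ncard := by
      rw [hBdef, Finset.card_image_of_injective _ (fun i j h => by omega),
        Finset.card_range]
    omega
  · -- number of stable extensions
    rw [stb_killPad F0 D z Zfin B hzZ hZz hzinj hDsub hZA hBA hBZ]
    have hdiff : AF.stb F0 \ D = 𝕋 := by
      rw [hDdef]
      exact Set.diff_diff_cancel_left h𝕋sub
    rw [hdiff]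
    rw [Set.ncard_image_of_injOn, h𝕋k]
    intro S1 hS1 S2 hS2 heq
    have hd1 : Disjoint S1 (↑B : Set ℕ) := (hBA.mono_right (h𝕋sub hS1).1.1).symm
    have hd2 : Disjoint S2 (↑B : Set ℕ) := (hBA.mono_right (h𝕋sub hS2).1.1).symm
    have e1 : (S1 ∪ ↑B) \ ↑B = S1 := Set.union_diff_cancel_right (by
      simpa [Set.disjoint_iff_inter_eq_empty] using hd1)
    have e2 : (S2 ∪ ↑B) \ ↑B = S2 := Set.union_diff_cancel_right (by
      simpa [Set.disjoint_iff_inter_eq_empty] using hd2)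
    rw [← e1, ← e2]
    simp only at heq
    rw [heq]
end

section
/- For every stb-compact AF F that is conflict-explicit under stable semantics, the extension-set stb(F) is independent. -/
theorem conflict_explicit_compact_independent (F : AF)
    (hcomp : AFCompact AF.stb F) (hce : ConflictExplicit AF.stb F) :
    Independent (AF.stb F) := by
  classical
  set 𝕊 := AF.stb F with h𝕊
  have hArg : ArgS 𝕊 = (↑F.A : Set ℕ) := by
    apply subset_antisymm
    · rintro x ⟨S, hS, hx⟩; exact hS.1.1 hx
    · intro x hx
      obtain ⟨S, hS, hxS⟩ := hcomp x hx
      exact ⟨S, hS, hxS⟩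
  have hRnP : ∀ a b : ℕ, (a, b) ∈ F.R → (a, b) ∉ PairsS 𝕊 := by
    rintro a b hR ⟨S, hS, ha, hb⟩
    exact hS.1.2 a ha b hb hR
  have hf : ∀ T ∈ minusSet 𝕊, ∃ a, a ∈ (↑F.A : Set ℕ) ∧ a ∉ T ∧
      ∀ s ∈ T, (s, a) ∉ F.R := by
    rintro T ⟨⟨⟨hTA, hTp⟩, _hmax⟩, hTnot⟩
    by_contra h
    push_neg at h
    apply hTnot
    refine ⟨⟨fun x hx => hArg ▸ hTA hx,
            fun a ha b hb hR => hRnP a b hR (hTp a ha b hb)⟩, ?_⟩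
    intro a ha haT
    exact h a ha haT
  choose g hg1 hg2 hg3 using hf
  set f : Set ℕ → ℕ := fun T => if h : T ∈ minusSet 𝕊 then g T h else 0 with hfdef
  have hfeq : ∀ T (h : T ∈ minusSet 𝕊), f T = g T h := by
    intro T h; simp [hfdef, h]
  set Rm : Set (ℕ × ℕ) :=
    {p | ∃ S ∈ minusSet 𝕊, p.1 ∈ S ∧ p.2 = f S ∧ p ∉ PairsS 𝕊} with hRm
  have hTsubA : ∀ T ∈ minusSet 𝕊, T ⊆ (↑F.A : Set ℕ) := by
    intro T hT x hx
    exact hArg ▸ hT.1.1.1 hx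
  have hnoR : ∀ T (h : T ∈ minusSet 𝕊), ∀ s ∈ T, (s, f T) ∉ F.R := by
    intro T h s hs
    rw [hfeq T h]; exact hg3 T h s hs
  refine ⟨Rm, ⟨f, ?_, rfl⟩, ?_, ?_⟩
  · intro T hT
    rw [hfeq T hT, hArg]
    exact ⟨hg1 T hT, hg2 T hT⟩
  · rintro a b ⟨T, hT, haT, hbf, hnP⟩ ⟨T', hT', hbT', haf, _⟩
    exfalso
    have haA : a ∈ F.A := hTsubA T hT haT
    have hbA : b ∈ F.A := hTsubA T' hT' hbT'
    have hbf' : b = f T := hbf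
    have haf' : a = f T' := haf
    have hab : (a, b) ∉ F.R := hbf' ▸ hnoR T hT a haT
    have hba : (b, a) ∉ F.R := haf' ▸ hnoR T' hT' b hbT'
    rcases hce a haA b hbA hnP with h | h
    · exact hab h
    · exact hba h
  · rintro S hS a ⟨haArg, haS⟩
    rw [hArg] at haArg
    obtain ⟨s, hsS, hsR⟩ := hS.2 a haArg haS
    refine ⟨s, hsS, ?_⟩
    rintro (⟨T, hT, hsT, haf, _⟩ | hP)
    · have haf' : a = f T := haf
      exact (haf' ▸ hnoR T hT s hsT) hsR
    · exact hRnP s a hsR hP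
end
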